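/- A ×_T B has a bounded approximate identity if and only if both A and B have bounded approximate identities. -/

import Mathlib

/-- The T-Lau product multiplication on `A × B`. -/
def lauMul {A B : Type*} [NonUnitalNormedRing A] [NonUnitalNormedRing B]
    [NormedSpace ℂ A] [NormedSpace ℂ B]
    (T : B →L[ℂ] A) (p q : A × B) : A × B :=
  (p.1 * q.1 + T p.2 * q.1 + p.1 * T q.2, p.2 * q.2)

/-- A bounded approximate identity for a Banach algebra `D` with multiplication `mul`:
a bounded net `(e_i)` with `e_i d → d` and `d e_i → d` for all `d`. -/
def HasBAI (D : Type*) [SeminormedAddCommGroup D] (mul : D → D → D) : Prop :=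
  ∃ (M : ℝ) (ι : Type) (l : Filter ι) (e : ι → D), l.NeBot ∧ (∀ i, ‖e i‖ ≤ M) ∧
    (∀ d, Filter.Tendsto (fun i => mul (e i) d) l (nhds d)) ∧
    (∀ d, Filter.Tendsto (fun i => mul d (e i)) l (nhds d))

/-- `A ×_T B` has a bounded approximate identity if and only if both `A` and `B` have
bounded approximate identities. -/
theorem lau_bai_iff {A B : Type*}
    [NonUnitalNormedRing A] [NormedSpace ℂ A] [CompleteSpace A]
    [NonUnitalNormedRing B] [NormedSpace ℂ B] [CompleteSpace B]
    (T : B →L[ℂ] A) (hTmul : ∀ x y : B, T (x * y) = T x * T y)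
    (hTnorm : ∀ b : B, ‖T b‖ ≤ ‖b‖) :
    HasBAI (A × B) (lauMul T) ↔ (HasBAI A (· * ·) ∧ HasBAI B (· * ·)) := by
  constructor
  · rintro ⟨M, ι, l, e, hl, hb, hleft, hright⟩
    refine ⟨⟨M + M, ι, l, fun i => (e i).1 + T (e i).2, hl, ?_, ?_, ?_⟩,
            ⟨M, ι, l, fun i => (e i).2, hl, ?_, ?_, ?_⟩⟩
    · intro i
      calc ‖(e i).1 + T (e i).2‖ ≤ ‖(e i).1‖ + ‖T (e i).2‖ := norm_add_le _ _
        _ ≤ M + M := add_le_add (le_trans (norm_fst_le _) (hb i))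
            (le_trans (hTnorm _) (le_trans (norm_snd_le _) (hb i)))
    · intro a
      have h := (continuous_fst.tendsto _).comp (hleft (a, 0))
      simp only [Function.comp, lauMul, map_zero, mul_zero, add_zero] at h
      simpa [add_mul, Function.comp_def] using h
    · intro a
      have h := (continuous_fst.tendsto _).comp (hright (a, 0))
      simp only [Function.comp, lauMul, map_zero, zero_mul, add_zero] at h
      simpa [mul_add, Function.comp_def] using h
    · intro i; exact le_trans (norm_snd_le _) (hb i)
    · intro b
      have h := (continuous_snd.tendsto _).comp (hleft (0, b))
      simpa [Function.comp_def, lauMul] using h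
    · intro b
      have h := (continuous_snd.tendsto _).comp (hright (0, b))
      simpa [Function.comp_def, lauMul] using h
  · rintro ⟨⟨M₁, ι₁, l₁, u, hl₁, hb₁, hul, hur⟩, ⟨M₂, ι₂, l₂, v, hl₂, hb₂, hvl, hvr⟩⟩
    refine ⟨max (M₁ + M₂) M₂, ι₁ × ι₂, l₁ ×ˢ l₂,
      fun p => (u p.1 - T (v p.2), v p.2), hl₁.prod hl₂, ?_, ?_, ?_⟩
    · intro p
      rw [Prod.norm_def]
      refine max_le_max ?_ (hb₂ _)
      calc ‖u p.1 - T (v p.2)‖ ≤ ‖u p.1‖ + ‖T (v p.2)‖ := norm_sub_le _ _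
        _ ≤ M₁ + M₂ := add_le_add (hb₁ _) (le_trans (hTnorm _) (hb₂ _))
    · rintro ⟨a, b⟩
      show Filter.Tendsto (fun p : ι₁ × ι₂ =>
        ((u p.1 - T (v p.2)) * a + T (v p.2) * a + (u p.1 - T (v p.2)) * T b,
          v p.2 * b)) (l₁ ×ˢ l₂) (nhds (a, b))
      refine Filter.Tendsto.prodMk_nhds ?_ ((hvl b).comp Filter.tendsto_snd)
      have key : ∀ (i : ι₁) (j : ι₂),
          (u i - T (v j)) * a + T (v j) * a + (u i - T (v j)) * T b
            = u i * (a + T b) - T (v j * b) := by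
        intro i j
        simp only [sub_mul, mul_add, hTmul]
        abel
      have h1 : Filter.Tendsto (fun p : ι₁ × ι₂ => u p.1 * (a + T b)) (l₁ ×ˢ l₂)
          (nhds (a + T b)) := (hul (a + T b)).comp Filter.tendsto_fst
      have h2 : Filter.Tendsto (fun p : ι₁ × ι₂ => T (v p.2 * b)) (l₁ ×ˢ l₂)
          (nhds (T b)) := (T.continuous.tendsto b).comp ((hvl b).comp Filter.tendsto_snd)
      have h := h1.sub h2
      rw [add_sub_cancel_right] at h
      exact Filter.Tendsto.congr (fun p => (key p.1 p.2).symm) h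
    · rintro ⟨a, b⟩
      show Filter.Tendsto (fun p : ι₁ × ι₂ =>
        (a * (u p.1 - T (v p.2)) + T b * (u p.1 - T (v p.2)) + a * T (v p.2),
          b * v p.2)) (l₁ ×ˢ l₂) (nhds (a, b))
      refine Filter.Tendsto.prodMk_nhds ?_ ((hvr b).comp Filter.tendsto_snd)
      have key : ∀ (i : ι₁) (j : ι₂),
          a * (u i - T (v j)) + T b * (u i - T (v j)) + a * T (v j)
            = (a + T b) * u i - T (b * v j) := by
        intro i j
        simp only [mul_sub, add_mul, hTmul]
        abel
      have h1 : Filter.Tendsto (fun p : ι₁ × ι₂ => (a + T b) * u p.1) (l₁ ×ˢ l₂)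
          (nhds (a + T b)) := (hur (a + T b)).comp Filter.tendsto_fst
      have h2 : Filter.Tendsto (fun p : ι₁ × ι₂ => T (b * v p.2)) (l₁ ×ˢ l₂)
          (nhds (T b)) := (T.continuous.tendsto b).comp ((hvr b).comp Filter.tendsto_snd)
      have h := h1.sub h2
      rw [add_sub_cancel_right] at h
      exact Filter.Tendsto.congr (fun p => (key p.1 p.2).symm) h
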